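/- Let σ be a finite Borel measure on ℝ such that ∫ (1 + t²)/t² dσ(t) < ∞ (integral over ℝ, interpreted as +∞ if σ({0}) > 0, so in particular σ({0}) = 0). Then the function t ↦ 1/t is σ-integrable, and with H(z) = z + γ + ∫ (1 + t z)/(z - t) dσ(t) one has lim_{ε → 0⁺} H(iε) = γ - ∫ (1/t) dσ(t), a real number. -/

import Mathlib

open MeasureTheory Filter Complex

theorem stmt7 (σ : Measure ℝ) [IsFiniteMeasure σ] (γ : ℝ)
    (hatom : σ {0} = 0)
    (hL : (∫⁻ t : ℝ, ENNReal.ofReal (1 + t ^ 2) / ENNReal.ofReal (t ^ 2) ∂σ) < ⊤)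
    (H : ℂ → ℂ)
    (hH : ∀ z : ℂ, 0 < z.im →
      H z = z + (γ : ℂ) + ∫ t : ℝ, (1 + (t : ℂ) * z) / (z - (t : ℂ)) ∂σ) :
    Integrable (fun t : ℝ => 1 / t) σ ∧
    Tendsto (fun ε : ℝ => H ((ε : ℂ) * Complex.I))
      (nhdsWithin 0 (Set.Ioi 0))
      (nhds ((γ - ∫ t : ℝ, 1 / t ∂σ : ℝ) : ℂ)) := by
  have hae : ∀ᵐ t ∂σ, t ≠ (0:ℝ) := by
    rw [ae_iff]
    simpa using hatom
  set g : ℝ → ℝ := fun t => (1 + t^2)/t^2 with hgdef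
  have hgmeas : Measurable g := by fun_prop
  have hgint : Integrable g σ := by
    refine ⟨hgmeas.aestronglyMeasurable, ?_⟩
    rw [hasFiniteIntegral_iff_ofReal ?_]
    · refine lt_of_le_of_lt (le_of_eq (lintegral_congr_ae ?_)) hL
      filter_upwards [hae] with t ht
      rw [ENNReal.ofReal_div_of_pos (by positivity)]
    · filter_upwards with t
      rcases eq_or_ne t 0 with h | h
      · simp [hgdef, h]
      · positivity
  have h1t : Integrable (fun t : ℝ => 1/t) σ := by
    refine hgint.mono (by fun_prop) ?_
    filter_upwards with t
    rcases eq_or_ne t 0 with h | h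
    · simp [hgdef, h]
    · have ht2 : (0:ℝ) < t^2 := by positivity
      have h1 : |1/t| = 1/|t| := by rw [abs_div, abs_one]
      have h2 : |g t| = (1+t^2)/t^2 := by
        rw [hgdef]; exact _root_.abs_of_nonneg (by positivity)
      rw [Real.norm_eq_abs, Real.norm_eq_abs, h1, h2, div_le_div_iff₀ (abs_pos.2 h) ht2]
      nlinarith [_root_.sq_abs t, abs_nonneg t, sq_nonneg (|t| - 1)]
  refine ⟨h1t, ?_⟩
  have hlim : Tendsto (fun ε : ℝ => ∫ t : ℝ, (1 + (t:ℂ)*((ε:ℂ)*I))/(((ε:ℂ)*I) - (t:ℂ)) ∂σ)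
      (nhdsWithin 0 (Set.Ioi 0)) (nhds (∫ t : ℝ, -(1/(t:ℂ)) ∂σ)) := by
    refine tendsto_integral_filter_of_dominated_convergence g ?_ ?_ hgint ?_
    · filter_upwards [self_mem_nhdsWithin] with ε hε
      have hε' : (0:ℝ) < ε := hε
      apply Continuous.aestronglyMeasurable
      refine Continuous.div (by continuity) (by continuity) ?_
      intro t h0
      have him : ((ε:ℂ)*I - (t:ℂ)).im = 0 := by rw [h0]; rfl
      simp at him
      linarith
    · filter_upwards [Ioc_mem_nhdsGT_of_mem ⟨le_refl 0, one_pos⟩] with ε hε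
      filter_upwards [hae] with t ht
      have ht2 : (0:ℝ) < t^2 := by positivity
      have hεpos : 0 < ε := hε.1
      have hden : ((ε:ℂ)*I - (t:ℂ)) ≠ 0 := by
        intro h0
        have him : ((ε:ℂ)*I - (t:ℂ)).im = 0 := by rw [h0]; rfl
        simp at him
        linarith
      rw [norm_div]
      rw [div_le_iff₀ (norm_pos_iff.2 hden)]
      have hx : ‖(1 + (t:ℂ)*((ε:ℂ)*I))‖^2 = 1 + t^2*ε^2 := by
        rw [Complex.sq_norm, Complex.normSq_apply]
        simp
        ring
      have hy : ‖((ε:ℂ)*I - (t:ℂ))‖^2 = ε^2 + t^2 := by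
        rw [Complex.sq_norm, Complex.normSq_apply]
        simp
        ring
      have hgnn : 0 ≤ g t := by positivity
      rw [← pow_le_pow_iff_left₀ (norm_nonneg _) (by positivity) (two_ne_zero)]
      rw [mul_pow, hx, hy, hgdef]
      rw [div_pow]
      rw [div_mul_eq_mul_div, le_div_iff₀ (by positivity)]
      have hε1 := hε.2
      have h6 : t^6*ε^2 ≤ t^6 := by
        nlinarith [mul_nonneg (show (0:ℝ) ≤ t^6 by positivity) (show (0:ℝ) ≤ 1 - ε^2 by nlinarith)]
      nlinarith [sq_nonneg t, sq_nonneg ε, sq_nonneg (t*ε), mul_pos ht2 ht2, h6]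
    · filter_upwards [hae] with t ht
      have hz : Tendsto (fun ε : ℝ => (ε:ℂ)*I) (nhdsWithin (0:ℝ) (Set.Ioi 0)) (nhds 0) := by
        have := ((Complex.continuous_ofReal.tendsto 0).mono_left
          (nhdsWithin_le_nhds : nhdsWithin (0:ℝ) (Set.Ioi 0) ≤ nhds 0)).mul_const I
        simpa using this
      have hd : ((0:ℂ) - (t:ℂ)) ≠ 0 := by simpa using Complex.ofReal_ne_zero.2 ht
      have hnum : Tendsto (fun ε : ℝ => 1 + (t:ℂ)*((ε:ℂ)*I)) (nhdsWithin 0 (Set.Ioi 0))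
          (nhds (1 + (t:ℂ)*0)) := tendsto_const_nhds.add (tendsto_const_nhds.mul hz)
      have hden2 : Tendsto (fun ε : ℝ => ((ε:ℂ)*I) - (t:ℂ)) (nhdsWithin 0 (Set.Ioi 0))
          (nhds ((0:ℂ) - (t:ℂ))) := hz.sub tendsto_const_nhds
      have hdiv := hnum.div hden2 hd
      convert hdiv using 2
      have htc : ((t:ℂ)) ≠ 0 := Complex.ofReal_ne_zero.2 ht
      · rfl
      · rw [mul_zero, add_zero, zero_sub, div_neg]
  have heq : ∀ᶠ ε : ℝ in nhdsWithin (0:ℝ) (Set.Ioi 0),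
      H ((ε:ℂ)*I) = (ε:ℂ)*I + (γ:ℂ) + ∫ t : ℝ, (1 + (t:ℂ)*((ε:ℂ)*I))/(((ε:ℂ)*I) - (t:ℂ)) ∂σ := by
    filter_upwards [self_mem_nhdsWithin] with ε hε
    exact hH _ (by simpa using (hε : (0:ℝ) < ε))
  have hz : Tendsto (fun ε : ℝ => (ε:ℂ)*I) (nhdsWithin (0:ℝ) (Set.Ioi 0)) (nhds 0) := by
    have := ((Complex.continuous_ofReal.tendsto 0).mono_left
      (nhdsWithin_le_nhds : nhdsWithin (0:ℝ) (Set.Ioi 0) ≤ nhds 0)).mul_const I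
    simpa using this
  have hTot : Tendsto
      (fun ε : ℝ => (ε:ℂ)*I + (γ:ℂ) + ∫ t : ℝ, (1 + (t:ℂ)*((ε:ℂ)*I))/(((ε:ℂ)*I) - (t:ℂ)) ∂σ)
      (nhdsWithin 0 (Set.Ioi 0)) (nhds ((0:ℂ) + (γ:ℂ) + ∫ t : ℝ, -(1/(t:ℂ)) ∂σ)) :=
    (hz.add tendsto_const_nhds).add hlim
  refine Tendsto.congr' (by filter_upwards [heq] with ε h; exact h.symm) ?_
  convert hTot using 2
  have : ∫ t : ℝ, -(1/(t:ℂ)) ∂σ = -((∫ t : ℝ, 1/t ∂σ : ℝ) : ℂ) := by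
    rw [integral_neg]
    congr 1
    calc ∫ t : ℝ, (1/(t:ℂ)) ∂σ = ∫ t : ℝ, ((1/t : ℝ) : ℂ) ∂σ := by
          apply integral_congr_ae; filter_upwards with t; push_cast; ring
      _ = ((∫ t : ℝ, 1/t ∂σ : ℝ) : ℂ) := integral_ofReal
  rw [this]
  push_cast
  ring
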